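/- Let R be a *-ring, let a ∈ R be both group invertible and Moore–Penrose invertible, and let x ∈ R be a projection satisfying x = aa⁺xa⁺a. Then a⁺axaa⁺ is a projection. -/
import Mathlib


theorem stmt_5 (R : Type*) [Ring R] [StarRing R] (a ap ag : R)
    (h1 : a * ap * a = a) (h2 : ap * a * ap = ap)
    (h3 : star (a * ap) = a * ap) (h4 : star (ap * a) = ap * a)
    (g1 : a * ag * a = a) (g2 : ag * a * ag = ag) (g3 : a * ag = ag * a)
    (x : R) (hx : x * x = x ∧ star x = x) (hxa : x = a * ap * x * ap * a) :
    ((ap * a * x * a * ap) * (ap * a * x * a * ap) = (ap * a * x * a * ap) ∧ star ((ap * a * x * a * ap)) = (ap * a * x * a * ap)) := by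
  obtain ⟨hx1, hx2⟩ := hx
  have h5 : a * ap * x = x := by
    calc a * ap * x = a * ap * (a * ap * x * ap * a) := by rw [← hxa]
    _ = a * ap * a * ap * x * ap * a := by noncomm_ring
    _ = a * ap * x * ap * a := by rw [h1]
    _ = x := hxa.symm
  have h6 : x * ap * a = x := by
    calc x * ap * a = (a * ap * x * ap * a) * ap * a := by rw [← hxa]
    _ = a * ap * x * ap * (a * ap * a) := by noncomm_ring
    _ = a * ap * x * ap * a := by rw [h1]
    _ = x := hxa.symm
  have h4' : star a * star ap = ap * a := by rw [← star_mul]; exact h4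
  have h3' : star ap * star a = a * ap := by rw [← star_mul]; exact h3
  have h7 : ap * a * x = x := by
    have h := congrArg star h6
    simp only [star_mul, hx2] at h
    calc ap * a * x = star a * star ap * x := by rw [h4']
    _ = x := by rw [mul_assoc]; exact h
  have h8 : x * a * ap = x := by
    have h := congrArg star h5
    simp only [star_mul, hx2] at h
    calc x * a * ap = x * (star ap * star a) := by rw [h3', mul_assoc]
    _ = x := h
  have ht : ap * a * x * a * ap = x := by
    calc ap * a * x * a * ap = ap * a * (x * a * ap) := by noncomm_ring
    _ = ap * a * x := by rw [h8]
    _ = x := h7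
  rw [ht]
  exact ⟨hx1, hx2⟩
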